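/- arXiv:1312.7342 — 3 statements merged into one kernel-verified Lean document; each statement's English description precedes it below -/
import Mathlib

section
/- For every T > 0 and z > 0, the integral from 0 to T of t · z/(√(2π) t^{3/2}) · exp(−z²/(2t)) dt equals (2z/√(2π)) · (√T · exp(−z²/(2T)) − √(2π) · z · (1 − Φ(z/√T))), where Φ is the standard normal CDF; in particular the integral tends to infinity as T → ∞. -/
open Real MeasureTheory Filter
open scoped Topology

/-- The cumulative distribution function of a standard normal random variable. -/
noncomputable def stdNormalCDF (x : ℝ) : ℝ :=
  ∫ u in Set.Iic x, (1 / Real.sqrt (2 * π)) * Real.exp (-u ^ 2 / 2)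

section Aux

lemma gaussFun_eq : (fun u : ℝ => (1 / Real.sqrt (2 * π)) * Real.exp (-u ^ 2 / 2)) =
    fun u : ℝ => (1 / Real.sqrt (2 * π)) * Real.exp (-(1 / 2 : ℝ) * u ^ 2) := by
  funext u; congr 2; ring

lemma integrable_gauss :
    Integrable (fun u : ℝ => (1 / Real.sqrt (2 * π)) * Real.exp (-u ^ 2 / 2)) := by
  rw [gaussFun_eq]
  exact (integrable_exp_neg_mul_sq (by norm_num)).const_mul _

lemma continuous_gauss :
    Continuous (fun u : ℝ => (1 / Real.sqrt (2 * π)) * Real.exp (-u ^ 2 / 2)) := by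
  fun_prop

lemma stdNormalCDF_eq (x : ℝ) : stdNormalCDF x =
    stdNormalCDF 0 + ∫ u in (0:ℝ)..x, (1 / Real.sqrt (2 * π)) * Real.exp (-u ^ 2 / 2) := by
  have h := intervalIntegral.integral_Iic_sub_Iic (μ := volume) (a := (0:ℝ)) (b := x)
    integrable_gauss.integrableOn integrable_gauss.integrableOn
  unfold stdNormalCDF
  linarith [h]

lemma hasDerivAt_stdNormalCDF (x : ℝ) :
    HasDerivAt stdNormalCDF ((1 / Real.sqrt (2 * π)) * Real.exp (-x ^ 2 / 2)) x := by
  have h : HasDerivAt (fun y : ℝ => stdNormalCDF 0 +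
      ∫ u in (0:ℝ)..y, (1 / Real.sqrt (2 * π)) * Real.exp (-u ^ 2 / 2))
      ((1 / Real.sqrt (2 * π)) * Real.exp (-x ^ 2 / 2)) x := by
    exact (intervalIntegral.integral_hasDerivAt_right
      (integrable_gauss.intervalIntegrable)
      (continuous_gauss.stronglyMeasurableAtFilter _ _)
      continuous_gauss.continuousAt).const_add _
  exact h.congr_of_eventuallyEq (Filter.Eventually.of_forall stdNormalCDF_eq)

lemma continuous_stdNormalCDF : Continuous stdNormalCDF :=
  continuous_iff_continuousAt.2 fun x => (hasDerivAt_stdNormalCDF x).continuousAt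

lemma integral_gauss_total :
    ∫ u : ℝ, (1 / Real.sqrt (2 * π)) * Real.exp (-u ^ 2 / 2) = 1 := by
  rw [gaussFun_eq, MeasureTheory.integral_const_mul, integral_gaussian,
    show π / (1/2 : ℝ) = 2 * π by ring]
  rw [one_div, inv_mul_cancel₀ (Real.sqrt_ne_zero'.2 (by positivity))]

lemma tendsto_stdNormalCDF_atTop : Tendsto stdNormalCDF atTop (𝓝 1) := by
  have h := (MeasureTheory.aecover_Iic (μ := volume)
    (tendsto_id : Tendsto (id : ℝ → ℝ) atTop atTop)).integral_tendsto_of_countably_generated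
    integrable_gauss
  rw [integral_gauss_total] at h
  exact h

/-- Antiderivative (extended by `0` at `0`). -/
noncomputable def Fz (z t : ℝ) : ℝ :=
  if t = 0 then 0 else (2 * z / Real.sqrt (2 * π)) *
    (Real.sqrt t * Real.exp (-z ^ 2 / (2 * t)) -
      Real.sqrt (2 * π) * z * (1 - stdNormalCDF (z / Real.sqrt t)))

/-- The simplified integrand. -/
noncomputable def fz (z t : ℝ) : ℝ :=
  z / Real.sqrt (2 * π) * (Real.exp (-z ^ 2 / (2 * t)) / Real.sqrt t)

lemma fz_eq_integrand (z : ℝ) {t : ℝ} (ht : 0 ≤ t) :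
    t * (z / (Real.sqrt (2 * π) * t ^ ((3 : ℝ) / 2)) * Real.exp (-z ^ 2 / (2 * t))) = fz z t := by
  rcases eq_or_lt_of_le ht with h | h
  · simp [fz, ← h]
  · have hw : (0:ℝ) < Real.sqrt (2 * π) := Real.sqrt_pos.2 (by positivity)
    have hs : (0:ℝ) < Real.sqrt t := Real.sqrt_pos.2 h
    have h32 : t ^ ((3:ℝ)/2) = t * Real.sqrt t := by
      rw [show (3:ℝ)/2 = 1 + 1/2 by norm_num, Real.rpow_add h, Real.rpow_one,
        ← Real.sqrt_eq_rpow]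
    simp only [fz]
    rw [h32, ← Real.sq_sqrt h.le]
    have hsne := hs.ne'
    field_simp

lemma hasDerivAt_Fz (z : ℝ) {t : ℝ} (ht : 0 < t) : HasDerivAt (Fz z) (fz z t) t := by
  have hw : (0:ℝ) < Real.sqrt (2 * π) := Real.sqrt_pos.2 (by positivity)
  have hs : (0:ℝ) < Real.sqrt t := Real.sqrt_pos.2 ht
  set w := Real.sqrt (2 * π) with hwdef
  set s := Real.sqrt t with hsdef
  -- derivative of sqrt
  have h1 : HasDerivAt Real.sqrt (1 / (2 * s)) t := Real.hasDerivAt_sqrt ht.ne'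
  -- derivative of the exponent
  have h2 : HasDerivAt (fun u : ℝ => -z ^ 2 / (2 * u)) (z ^ 2 / (2 * t ^ 2)) t := by
    have h := (hasDerivAt_inv ht.ne').const_mul (-z ^ 2 / 2)
    have hfun : (fun u : ℝ => -z ^ 2 / (2 * u)) = fun u : ℝ => -z ^ 2 / 2 * u⁻¹ := by
      funext u; ring
    rw [hfun, show z ^ 2 / (2 * t ^ 2) = -z ^ 2 / 2 * -(t ^ 2)⁻¹ by ring]
    exact h
  have h3 : HasDerivAt (fun u : ℝ => Real.exp (-z ^ 2 / (2 * u)))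
      (Real.exp (-z ^ 2 / (2 * t)) * (z ^ 2 / (2 * t ^ 2))) t := h2.exp
  have hA : HasDerivAt (fun u : ℝ => Real.sqrt u * Real.exp (-z ^ 2 / (2 * u)))
      (1 / (2 * s) * Real.exp (-z ^ 2 / (2 * t)) +
        s * (Real.exp (-z ^ 2 / (2 * t)) * (z ^ 2 / (2 * t ^ 2)))) t := h1.mul h3
  -- derivative of z / sqrt
  have h4 : HasDerivAt (fun u : ℝ => z / Real.sqrt u) (z * (-(1 / (2 * s)) / s ^ 2)) t := by
    have h := ((h1.inv hs.ne').const_mul z)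
    have hfun : (fun u : ℝ => z / Real.sqrt u) = fun u : ℝ => z * (Real.sqrt u)⁻¹ := by
      funext u; rw [div_eq_mul_inv]
    rw [hfun]
    exact h
  have h5 : HasDerivAt (fun u : ℝ => stdNormalCDF (z / Real.sqrt u))
      ((1 / w) * Real.exp (-(z / s) ^ 2 / 2) * (z * (-(1 / (2 * s)) / s ^ 2))) t := by
    have := (hasDerivAt_stdNormalCDF (z / s)).comp t h4
    exact this
  have hB : HasDerivAt (fun u : ℝ => w * z * (1 - stdNormalCDF (z / Real.sqrt u)))
      (w * z * -((1 / w) * Real.exp (-(z / s) ^ 2 / 2) * (z * (-(1 / (2 * s)) / s ^ 2)))) t :=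
    (h5.const_sub 1).const_mul (w * z)
  have hF : HasDerivAt (fun u : ℝ => (2 * z / w) *
      (Real.sqrt u * Real.exp (-z ^ 2 / (2 * u)) - w * z * (1 - stdNormalCDF (z / Real.sqrt u))))
      ((2 * z / w) * ((1 / (2 * s) * Real.exp (-z ^ 2 / (2 * t)) +
        s * (Real.exp (-z ^ 2 / (2 * t)) * (z ^ 2 / (2 * t ^ 2)))) -
        w * z * -((1 / w) * Real.exp (-(z / s) ^ 2 / 2) * (z * (-(1 / (2 * s)) / s ^ 2))))) t :=
    (hA.sub hB).const_mul _
  have hexp_eq : Real.exp (-(z / s) ^ 2 / 2) = Real.exp (-z ^ 2 / (2 * t)) := by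
    congr 1
    rw [div_pow, hsdef, Real.sq_sqrt ht.le]
    ring
  have heq : Fz z =ᶠ[𝓝 t] fun u : ℝ => (2 * z / w) *
      (Real.sqrt u * Real.exp (-z ^ 2 / (2 * u)) -
        w * z * (1 - stdNormalCDF (z / Real.sqrt u))) := by
    filter_upwards [eventually_ne_nhds ht.ne'] with u hu
    simp only [Fz]
    rw [if_neg hu, ← hwdef]
  rw [show fz z t = (2 * z / w) * ((1 / (2 * s) * Real.exp (-z ^ 2 / (2 * t)) +
        s * (Real.exp (-z ^ 2 / (2 * t)) * (z ^ 2 / (2 * t ^ 2)))) -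
        w * z * -((1 / w) * Real.exp (-(z / s) ^ 2 / 2) * (z * (-(1 / (2 * s)) / s ^ 2)))) by
    rw [hexp_eq]
    simp only [fz]
    rw [← hwdef, ← hsdef]
    rw [show t = s ^ 2 by rw [hsdef, Real.sq_sqrt ht.le]]
    field_simp
    ring]
  exact hF.congr_of_eventuallyEq heq

lemma tendsto_Fz_zero (z : ℝ) (hz : 0 < z) : Tendsto (Fz z) (𝓝[>] (0:ℝ)) (𝓝 0) := by
  have hw : (0:ℝ) < Real.sqrt (2 * π) := Real.sqrt_pos.2 (by positivity)
  have hsqrt : Tendsto Real.sqrt (𝓝[>] (0:ℝ)) (𝓝 0) := by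
    have := (Real.continuous_sqrt.tendsto 0).mono_left (nhdsWithin_le_nhds (s := Set.Ioi (0:ℝ)))
    simpa using this
  have hsqrt' : Tendsto Real.sqrt (𝓝[>] (0:ℝ)) (𝓝[>] 0) := by
    rw [tendsto_nhdsWithin_iff]
    exact ⟨hsqrt, eventually_mem_nhdsWithin.mono fun t ht => Real.sqrt_pos.2 ht⟩
  have hinv : Tendsto (fun t : ℝ => (Real.sqrt t)⁻¹) (𝓝[>] (0:ℝ)) atTop :=
    tendsto_inv_nhdsGT_zero.comp hsqrt'
  have hzdiv : Tendsto (fun t : ℝ => z / Real.sqrt t) (𝓝[>] (0:ℝ)) atTop := by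
    simp only [div_eq_mul_inv]
    exact hinv.const_mul_atTop hz
  have hPhi : Tendsto (fun t : ℝ => stdNormalCDF (z / Real.sqrt t)) (𝓝[>] (0:ℝ)) (𝓝 1) :=
    tendsto_stdNormalCDF_atTop.comp hzdiv
  have h2t : Tendsto (fun t : ℝ => 2 * t) (𝓝[>] (0:ℝ)) (𝓝[>] 0) := by
    rw [tendsto_nhdsWithin_iff]
    constructor
    · have := ((continuous_mul_left (2:ℝ)).tendsto (0:ℝ)).mono_left
        (nhdsWithin_le_nhds (s := Set.Ioi (0:ℝ)))
      simpa using this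
    · exact eventually_mem_nhdsWithin.mono fun t ht => by
        simpa using mul_pos two_pos (show (0:ℝ) < t from ht)
  have hexp : Tendsto (fun t : ℝ => Real.exp (-z ^ 2 / (2 * t))) (𝓝[>] (0:ℝ)) (𝓝 0) := by
    have h1 : Tendsto (fun t : ℝ => z ^ 2 * (2 * t)⁻¹) (𝓝[>] (0:ℝ)) atTop :=
      (tendsto_inv_nhdsGT_zero.comp h2t).const_mul_atTop (by positivity)
    have h2 := Real.tendsto_exp_atBot.comp (tendsto_neg_atTop_atBot.comp h1)
    refine h2.congr fun t => ?_
    simp only [Function.comp_apply]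
    congr 1
    ring
  have hA : Tendsto (fun t : ℝ => Real.sqrt t * Real.exp (-z ^ 2 / (2 * t)))
      (𝓝[>] (0:ℝ)) (𝓝 0) := by
    have := hsqrt.mul hexp
    simpa using this
  have hB : Tendsto (fun t : ℝ => Real.sqrt (2 * π) * z * (1 - stdNormalCDF (z / Real.sqrt t)))
      (𝓝[>] (0:ℝ)) (𝓝 0) := by
    have h1 := (tendsto_const_nhds (x := (1:ℝ)) (f := 𝓝[>] (0:ℝ))).sub hPhi
    have h2 := h1.const_mul (Real.sqrt (2 * π) * z)
    simpa using h2
  have hfinal := (hA.sub hB).const_mul (2 * z / Real.sqrt (2 * π))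
  have heq : Fz z =ᶠ[𝓝[>] (0:ℝ)] fun t : ℝ => (2 * z / Real.sqrt (2 * π)) *
      (Real.sqrt t * Real.exp (-z ^ 2 / (2 * t)) -
        Real.sqrt (2 * π) * z * (1 - stdNormalCDF (z / Real.sqrt t))) := by
    filter_upwards [eventually_mem_nhdsWithin] with t ht
    simp only [Fz]
    rw [if_neg (ne_of_gt ht)]
  refine Tendsto.congr' heq.symm ?_
  simpa using hfinal

lemma tendsto_fz_zero (z : ℝ) (hz : 0 < z) : Tendsto (fz z) (𝓝[>] (0:ℝ)) (𝓝 0) := by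
  have hkey := tendsto_rpow_mul_exp_neg_mul_atTop_nhds_zero (1/2) (z ^ 2 / 2) (by positivity)
  have hcomp := hkey.comp tendsto_inv_nhdsGT_zero
  have hconst := hcomp.const_mul (z / Real.sqrt (2 * π))
  rw [mul_zero] at hconst
  refine Tendsto.congr' ?_ hconst
  filter_upwards [eventually_mem_nhdsWithin] with t ht
  have ht' : (0:ℝ) < t := ht
  simp only [Function.comp_apply, fz]
  rw [← Real.sqrt_eq_rpow, Real.sqrt_inv,
    show -(z ^ 2 / 2) * t⁻¹ = -z ^ 2 / (2 * t) by ring,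
    div_eq_mul_inv (Real.exp _)]
  ring

lemma continuousOn_fz (z : ℝ) (hz : 0 < z) {T : ℝ} (hT : 0 < T) :
    ContinuousOn (fz z) (Set.Icc 0 T) := by
  intro x hx
  rcases eq_or_lt_of_le hx.1 with h | h
  · -- x = 0
    rw [← continuousWithinAt_diff_self]
    have hsub : Set.Icc (0:ℝ) T \ {x} ⊆ Set.Ioi 0 := by
      intro y hy
      rcases eq_or_lt_of_le hy.1.1 with h' | h'
      · exact absurd (h'.symm.trans h) hy.2
      · exact h'
    have htd : Tendsto (fz z) (𝓝[Set.Icc (0:ℝ) T \ {x}] x) (𝓝 0) := by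
      refine (tendsto_fz_zero z hz).mono_left ?_
      rw [← h] at hsub ⊢
      exact nhdsWithin_mono _ hsub
    have hx0 : fz z x = 0 := by
      rw [← h]; simp [fz]
    show Tendsto (fz z) (𝓝[Set.Icc (0:ℝ) T \ {x}] x) (𝓝 (fz z x))
    rw [hx0]
    exact htd
  · -- x > 0
    have hs : (0:ℝ) < Real.sqrt x := Real.sqrt_pos.2 h
    apply ContinuousAt.continuousWithinAt
    apply ContinuousAt.mul continuousAt_const
    apply ContinuousAt.div
    · apply Real.continuous_exp.continuousAt.comp
      exact (continuousAt_const.div (by fun_prop) (by positivity))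
    · exact Real.continuous_sqrt.continuousAt
    · exact hs.ne'

lemma integral_fz (z : ℝ) (hz : 0 < z) {T : ℝ} (hT : 0 < T) :
    ∫ t in (0:ℝ)..T, fz z t = Fz z T := by
  have hcont : ContinuousOn (Fz z) (Set.Icc 0 T) := by
    intro x hx
    rcases eq_or_lt_of_le hx.1 with h | h
    · rw [← continuousWithinAt_diff_self]
      have hsub : Set.Icc (0:ℝ) T \ {x} ⊆ Set.Ioi 0 := by
        intro y hy
        rcases eq_or_lt_of_le hy.1.1 with h' | h'
        · exact absurd (h'.symm.trans h) hy.2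
        · exact h'
      have htd : Tendsto (Fz z) (𝓝[Set.Icc (0:ℝ) T \ {x}] x) (𝓝 0) := by
        refine (tendsto_Fz_zero z hz).mono_left ?_
        rw [← h] at hsub ⊢
        exact nhdsWithin_mono _ hsub
      have hx0 : Fz z x = 0 := by rw [← h]; simp [Fz]
      show Tendsto (Fz z) (𝓝[Set.Icc (0:ℝ) T \ {x}] x) (𝓝 (Fz z x))
      rw [hx0]
      exact htd
    · exact (hasDerivAt_Fz z h).continuousAt.continuousWithinAt
  have hderiv : ∀ x ∈ Set.Ioo (0:ℝ) T, HasDerivWithinAt (Fz z) (fz z x) (Set.Ioi x) x :=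
    fun x hx => (hasDerivAt_Fz z hx.1).hasDerivWithinAt
  have hint : IntervalIntegrable (fz z) volume 0 T := by
    apply ContinuousOn.intervalIntegrable
    rw [Set.uIcc_of_le hT.le]
    exact continuousOn_fz z hz hT
  have h := intervalIntegral.integral_eq_sub_of_hasDeriv_right_of_le hT.le hcont hderiv hint
  rw [h]
  simp [Fz]

end Aux

/-- For every `T > 0` and `z > 0`,
`∫_0^T t · z/(√(2π) t^{3/2}) · exp(−z²/(2t)) dt
  = (2z/√(2π)) (√T exp(−z²/(2T)) − √(2π) z (1 − Φ(z/√T)))`,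
and the integral tends to infinity as `T → ∞`. -/
theorem truncated_last_passage_mean (z : ℝ) (hz : 0 < z) :
    (∀ T : ℝ, 0 < T →
      (∫ t in (0 : ℝ)..T,
          t * (z / (Real.sqrt (2 * π) * t ^ ((3 : ℝ) / 2)) * Real.exp (-z ^ 2 / (2 * t)))) =
        (2 * z / Real.sqrt (2 * π)) *
          (Real.sqrt T * Real.exp (-z ^ 2 / (2 * T)) -
            Real.sqrt (2 * π) * z * (1 - stdNormalCDF (z / Real.sqrt T)))) ∧
    Tendsto (fun T : ℝ =>
        ∫ t in (0 : ℝ)..T,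
          t * (z / (Real.sqrt (2 * π) * t ^ ((3 : ℝ) / 2)) * Real.exp (-z ^ 2 / (2 * t))))
      atTop atTop := by
  have hw : (0:ℝ) < Real.sqrt (2 * π) := Real.sqrt_pos.2 (by positivity)
  have key : ∀ T : ℝ, 0 < T →
      (∫ t in (0 : ℝ)..T,
          t * (z / (Real.sqrt (2 * π) * t ^ ((3 : ℝ) / 2)) * Real.exp (-z ^ 2 / (2 * t)))) =
        (2 * z / Real.sqrt (2 * π)) *
          (Real.sqrt T * Real.exp (-z ^ 2 / (2 * T)) -
            Real.sqrt (2 * π) * z * (1 - stdNormalCDF (z / Real.sqrt T))) := by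
    intro T hT
    have hcongr : (∫ t in (0 : ℝ)..T,
        t * (z / (Real.sqrt (2 * π) * t ^ ((3 : ℝ) / 2)) * Real.exp (-z ^ 2 / (2 * t)))) =
        ∫ t in (0:ℝ)..T, fz z t := by
      apply intervalIntegral.integral_congr
      intro t ht
      rw [Set.uIcc_of_le hT.le] at ht
      exact fz_eq_integrand z ht.1
    rw [hcongr, integral_fz z hz hT]
    simp only [Fz]
    rw [if_neg hT.ne']
  refine ⟨key, ?_⟩
  have hsqrtTop : Tendsto Real.sqrt atTop atTop := by
    refine Tendsto.congr' ?_ (tendsto_rpow_atTop (show (0:ℝ) < 1/2 by norm_num))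
    exact Filter.Eventually.of_forall fun x => (Real.sqrt_eq_rpow x).symm
  have hexp1 : Tendsto (fun T : ℝ => Real.exp (-z ^ 2 / (2 * T))) atTop (𝓝 1) := by
    have h2T : Tendsto (fun T : ℝ => 2 * T) atTop atTop :=
      (tendsto_id (α := ℝ)).const_mul_atTop two_pos
    have harg : Tendsto (fun T : ℝ => -z ^ 2 / (2 * T)) atTop (𝓝 0) :=
      Tendsto.div_atTop tendsto_const_nhds h2T
    have h := (Real.continuous_exp.tendsto 0).comp harg
    rw [Real.exp_zero] at h
    exact h
  have hfirst : Tendsto (fun T : ℝ => (2 * z / Real.sqrt (2 * π)) *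
      (Real.sqrt T * Real.exp (-z ^ 2 / (2 * T)))) atTop atTop :=
    (hsqrtTop.atTop_mul_pos one_pos hexp1).const_mul_atTop (by positivity)
  have hzT : Tendsto (fun T : ℝ => z / Real.sqrt T) atTop (𝓝 0) :=
    Tendsto.div_atTop tendsto_const_nhds hsqrtTop
  have hPhi : Tendsto (fun T : ℝ => stdNormalCDF (z / Real.sqrt T)) atTop
      (𝓝 (stdNormalCDF 0)) := (continuous_stdNormalCDF.tendsto 0).comp hzT
  have hsecond : Tendsto (fun T : ℝ => -((2 * z / Real.sqrt (2 * π)) *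
      (Real.sqrt (2 * π) * z * (1 - stdNormalCDF (z / Real.sqrt T))))) atTop
      (𝓝 (-((2 * z / Real.sqrt (2 * π)) *
        (Real.sqrt (2 * π) * z * (1 - stdNormalCDF 0))))) :=
    (((tendsto_const_nhds.sub hPhi).const_mul _).const_mul _).neg
  have hsum := hfirst.atTop_add hsecond
  refine Tendsto.congr' ?_ hsum
  filter_upwards [eventually_gt_atTop (0:ℝ)] with T hT
  rw [key T hT]
  ring
end

section
/- Define V(x) = −s(x)∫_0^x c(y) m(dy) − ∫_x^{r_*} s(y) c(y) m(dy) for 0 < x ≤ r_* and V(x) = 0 for x ≥ r_*, where ∫_0^{r_*} c dm = 0. Then V(x) ≤ 0 for all x > 0. -/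
open Real MeasureTheory Filter Set Topology

/-- The candidate value function
`V(x) = −s(x) ∫_0^x c dm − ∫_x^{r_*} s c dm` for `0 < x ≤ r_*`, `V = 0` for `x ≥ r_*`,
where `∫_0^{r_*} c dm = 0`, satisfies `V(x) ≤ 0` for all `x > 0`. -/
theorem value_function_nonpositive (s : ℝ → ℝ) (m : Measure ℝ) (z rstar : ℝ)
    (hz : 0 < z)
    (hcont : ContinuousOn s (Set.Ioi 0)) (hmono : StrictMonoOn s (Set.Ioi 0))
    (hneg : ∀ x : ℝ, 0 < x → s x < 0)
    (hstop : Tendsto s atTop (nhds 0))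
    (c : ℝ → ℝ) (hc : ∀ x : ℝ, c x = 1 - 2 * min (s x / s z) 1)
    (w : ℝ) (hw : 0 < w) (hsw : s w = s z / 2) (hwr : w < rstar)
    (hint1 : IntegrableOn c (Set.Ioc 0 rstar) m)
    (hint2 : IntegrableOn (fun y => s y * c y) (Set.Ioc 0 rstar) m)
    (hroot : (∫ y in Set.Ioc (0 : ℝ) rstar, c y ∂m) = 0)
    (V : ℝ → ℝ)
    (hV1 : ∀ x : ℝ, 0 < x → x ≤ rstar →
      V x = -(s x) * (∫ y in Set.Ioc (0 : ℝ) x, c y ∂m) -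
        ∫ y in Set.Ioc x rstar, s y * c y ∂m)
    (hV2 : ∀ x : ℝ, rstar ≤ x → V x = 0) :
    ∀ x : ℝ, 0 < x → V x ≤ 0 := by

  have hsz : s z < 0 := hneg z hz
  have hcle : ∀ y : ℝ, 0 < y → y ≤ w → c y ≤ 0 := by
    intro y hy hyw
    have hsy : s y ≤ s w := hmono.monotoneOn (mem_Ioi.2 hy) (mem_Ioi.2 hw) hyw
    have hratio : (1:ℝ)/2 ≤ s y / s z := by
      rw [le_div_iff_of_neg hsz]
      rw [hsw] at hsy; linarith
    have hmin : (1:ℝ)/2 ≤ min (s y / s z) 1 := le_min hratio (by norm_num)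
    rw [hc y]; linarith
  have hcge : ∀ y : ℝ, w ≤ y → 0 ≤ c y := by
    intro y hwy
    have hy : 0 < y := lt_of_lt_of_le hw hwy
    have hsy : s w ≤ s y := hmono.monotoneOn (mem_Ioi.2 hw) (mem_Ioi.2 hy) hwy
    have hratio : s y / s z ≤ 1/2 := by
      rw [div_le_iff_of_neg hsz]
      rw [hsw] at hsy; linarith
    have hmin : min (s y / s z) 1 ≤ 1/2 := le_trans (min_le_left _ _) hratio
    rw [hc y]; linarith
  have key : ∀ x : ℝ, w ≤ x → x ≤ rstar → V x ≤ 0 := by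
    intro x hwx hxr
    have hx : 0 < x := lt_of_lt_of_le hw hwx
    have h1 : IntegrableOn c (Set.Ioc 0 x) m :=
      hint1.mono_set (Set.Ioc_subset_Ioc le_rfl hxr)
    have h2 : IntegrableOn c (Set.Ioc x rstar) m :=
      hint1.mono_set (Set.Ioc_subset_Ioc hx.le le_rfl)
    have h2' : IntegrableOn (fun y => s y * c y) (Set.Ioc x rstar) m :=
      hint2.mono_set (Set.Ioc_subset_Ioc hx.le le_rfl)
    have hsplit : (∫ y in Set.Ioc (0:ℝ) x, c y ∂m) + (∫ y in Set.Ioc x rstar, c y ∂m) = 0 := by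
      rw [← setIntegral_union (Set.Ioc_disjoint_Ioc_of_le le_rfl) measurableSet_Ioc h1 h2,
        Set.Ioc_union_Ioc_eq_Ioc hx.le hxr]
      exact hroot
    have hVx := hV1 x hx hxr
    have heq : V x = ∫ y in Set.Ioc x rstar, (s x * c y - s y * c y) ∂m := by
      rw [integral_sub (h2.const_mul (s x)) h2', integral_const_mul, hVx]
      have : (∫ y in Set.Ioc (0:ℝ) x, c y ∂m) = - ∫ y in Set.Ioc x rstar, c y ∂m := by
        linarith
      rw [this]; ring
    rw [heq]
    apply setIntegral_nonpos measurableSet_Ioc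
    intro y hy
    have hy0 : 0 < y := lt_trans hx hy.1
    have hs : s x ≤ s y := hmono.monotoneOn (mem_Ioi.2 hx) (mem_Ioi.2 hy0) hy.1.le
    have hcy : 0 ≤ c y := hcge y (le_trans hwx hy.1.le)
    nlinarith
  intro x hx
  rcases le_or_gt rstar x with h | h
  · rw [hV2 x h]
  rcases le_or_gt w x with hwx | hxw
  · exact key x hwx h.le
  · have hxr : x ≤ rstar := (lt_trans hxw hwr).le
    have hVx := hV1 x hx hxr
    have hVw := hV1 w hw hwr.le
    have hVw0 : V w ≤ 0 := key w le_rfl hwr.le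
    have h1 : IntegrableOn c (Set.Ioc 0 x) m :=
      hint1.mono_set (Set.Ioc_subset_Ioc le_rfl hxr)
    have h1' : IntegrableOn c (Set.Ioc x w) m :=
      hint1.mono_set (Set.Ioc_subset_Ioc hx.le hwr.le)
    have h2' : IntegrableOn (fun y => s y * c y) (Set.Ioc x w) m :=
      hint2.mono_set (Set.Ioc_subset_Ioc hx.le hwr.le)
    have h3' : IntegrableOn (fun y => s y * c y) (Set.Ioc w rstar) m :=
      hint2.mono_set (Set.Ioc_subset_Ioc hw.le le_rfl)
    have hsplit1 : (∫ y in Set.Ioc (0:ℝ) w, c y ∂m)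
        = (∫ y in Set.Ioc (0:ℝ) x, c y ∂m) + ∫ y in Set.Ioc x w, c y ∂m := by
      rw [← setIntegral_union (Set.Ioc_disjoint_Ioc_of_le le_rfl) measurableSet_Ioc h1 h1',
        Set.Ioc_union_Ioc_eq_Ioc hx.le hxw.le]
    have hsplit2 : (∫ y in Set.Ioc x rstar, s y * c y ∂m)
        = (∫ y in Set.Ioc x w, s y * c y ∂m) + ∫ y in Set.Ioc w rstar, s y * c y ∂m := by
      rw [← setIntegral_union (Set.Ioc_disjoint_Ioc_of_le le_rfl) measurableSet_Ioc h2' h3',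
        Set.Ioc_union_Ioc_eq_Ioc hxw.le hwr.le]
    have hI0x : (∫ y in Set.Ioc (0:ℝ) x, c y ∂m) ≤ 0 := by
      apply setIntegral_nonpos measurableSet_Ioc
      intro y hy
      exact hcle y hy.1 (le_trans hy.2 hxw.le)
    have hsx : s x ≤ s w := hmono.monotoneOn (mem_Ioi.2 hx) (mem_Ioi.2 hw) hxw.le
    have hterm1 : (s w - s x) * (∫ y in Set.Ioc (0:ℝ) x, c y ∂m) ≤ 0 :=
      mul_nonpos_of_nonneg_of_nonpos (by linarith) hI0x
    have hterm2 : (∫ y in Set.Ioc x w, (s w * c y - s y * c y) ∂m) ≤ 0 := by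
      apply setIntegral_nonpos measurableSet_Ioc
      intro y hy
      have hy0 : 0 < y := lt_trans hx hy.1
      have hs : s y ≤ s w := hmono.monotoneOn (mem_Ioi.2 hy0) (mem_Ioi.2 hw) hy.2
      have hcy : c y ≤ 0 := hcle y hy0 hy.2
      nlinarith
    have hterm2' : s w * (∫ y in Set.Ioc x w, c y ∂m)
        - (∫ y in Set.Ioc x w, s y * c y ∂m) ≤ 0 := by
      rw [← integral_const_mul, ← integral_sub (h1'.const_mul (s w)) h2']
      exact hterm2
    have hdiff : V x - V w ≤ 0 := by
      rw [hVx, hVw, hsplit1, hsplit2]; ring_nf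
      ring_nf at hterm1 hterm2'
      linarith
    linarith
end

section
/- For the diffusion with scale function s(x) = 1 − exp(−(2λ/(κ(1−p))) x^{1−p}) and speed measure m(dx) = (1/(λκ)) x^{−p} exp((2λ/(κ(1−p))) x^{1−p}) dx, with λ, κ > 0 and p > 1, one has ∫_1^∞ (s(∞−) − s(y)) m(dy) < 1/(λκ(p−1)) < ∞; hence the boundary at infinity is attainable. -/
open Real MeasureTheory Filter Set

/-- For the explosive diffusion with scale function
`s(x) = 1 − exp(−(2λ/(κ(1−p))) x^{1−p})` and speed density
`(1/(λκ)) x^{−p} exp((2λ/(κ(1−p))) x^{1−p})`, with `λ, κ > 0` and `p > 1`, one has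
`∫_1^∞ (s(∞−) − s(y)) m(dy) < 1/(λκ(p−1)) < ∞`; hence the boundary at infinity is
attainable. -/
theorem explosive_diffusion_feller_test (lam kap p : ℝ)
    (hl : 0 < lam) (hk : 0 < kap) (hp : 1 < p)
    (s dens : ℝ → ℝ)
    (hs : ∀ x : ℝ, s x = 1 - Real.exp (-(2 * lam / (kap * (1 - p))) * x ^ (1 - p)))
    (hdens : ∀ x : ℝ, dens x =
      (1 / (lam * kap)) * x ^ (-p) * Real.exp ((2 * lam / (kap * (1 - p))) * x ^ (1 - p)))
    (sInfty : ℝ) (hsInfty : Tendsto s atTop (nhds sInfty)) :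
    (∫ y in Set.Ioi (1 : ℝ), (sInfty - s y) * dens y) < 1 / (lam * kap * (p - 1)) := by
  set c : ℝ := 2 * lam / (kap * (1 - p)) with hc_def
  have hc : c < 0 := div_neg_of_pos_of_neg (by linarith) (by nlinarith)
  have hA : (0:ℝ) < 1 / (lam * kap) := by positivity
  -- sInfty = 0
  have htend0 : Tendsto (fun x : ℝ => x ^ (1 - p)) atTop (nhds 0) := by
    have := tendsto_rpow_neg_atTop (show (0:ℝ) < p - 1 by linarith)
    rwa [neg_sub] at this
  have h0 : Tendsto s atTop (nhds 0) := by
    have h1 : Tendsto (fun x : ℝ => -c * x ^ (1 - p)) atTop (nhds (-c * 0)) :=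
      htend0.const_mul _
    have h2 : Tendsto (fun x : ℝ => Real.exp (-c * x ^ (1 - p))) atTop (nhds 1) := by
      have := (Real.continuous_exp.tendsto _).comp h1
      simpa [Function.comp_def] using this
    have h3 : Tendsto (fun x : ℝ => 1 - Real.exp (-c * x ^ (1 - p))) atTop (nhds (1 - 1)) :=
      tendsto_const_nhds.sub h2
    have hse : s = fun x => 1 - Real.exp (-c * x ^ (1 - p)) := funext hs
    rw [hse]
    simpa using h3
  have hS : sInfty = 0 := tendsto_nhds_unique hsInfty h0
  -- define the dominating function
  set g : ℝ → ℝ := fun y => (1 / (lam * kap)) * y ^ (-p) with hg_def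
  have hgint : IntegrableOn g (Ioi (1:ℝ)) :=
    (integrableOn_Ioi_rpow_of_lt (by linarith : -p < -1) one_pos).const_mul _
  have hdmeas : Measurable dens := by
    have : dens = fun x => (1 / (lam * kap)) * x ^ (-p) * Real.exp (c * x ^ (1 - p)) :=
      funext hdens
    rw [this]
    fun_prop
  have hdens_pos : ∀ x ∈ Ioi (1:ℝ), 0 < dens x := by
    intro x hx
    rw [hdens]
    have hx0 : (0:ℝ) < x := lt_trans one_pos hx
    positivity
  have hdens_le : ∀ x ∈ Ioi (1:ℝ), dens x ≤ g x := by
    intro x hx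
    have hx0 : (0:ℝ) < x := lt_trans one_pos hx
    rw [hdens, hg_def]
    have ht : 0 ≤ x ^ (1 - p) := Real.rpow_nonneg hx0.le _
    have hexp : Real.exp (c * x ^ (1 - p)) ≤ 1 :=
      Real.exp_le_one_iff.mpr (mul_nonpos_of_nonpos_of_nonneg hc.le ht)
    have hAx : 0 ≤ 1 / (lam * kap) * x ^ (-p) := by positivity
    calc 1 / (lam * kap) * x ^ (-p) * Real.exp (c * x ^ (1 - p))
        ≤ 1 / (lam * kap) * x ^ (-p) * 1 := by
          exact mul_le_mul_of_nonneg_left hexp hAx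
      _ = 1 / (lam * kap) * x ^ (-p) := by ring
  have hdint : IntegrableOn dens (Ioi (1:ℝ)) := by
    refine hgint.mono' hdmeas.aestronglyMeasurable ?_
    filter_upwards [ae_restrict_mem measurableSet_Ioi] with x hx
    rw [Real.norm_eq_abs, abs_of_nonneg (hdens_pos x hx).le]
    exact hdens_le x hx
  -- pointwise identity on Ioi 1
  have hpt : ∀ y ∈ Ioi (1:ℝ), (sInfty - s y) * dens y = g y - dens y := by
    intro y hy
    have hy0 : (0:ℝ) < y := lt_trans one_pos hy
    rw [hS, hs, hdens, hg_def]
    have he : Real.exp (-c * y ^ (1 - p)) * Real.exp (c * y ^ (1 - p)) = 1 := by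
      rw [← Real.exp_add]
      simpa using Real.exp_zero
    set e1 := Real.exp (-c * y ^ (1 - p))
    set e2 := Real.exp (c * y ^ (1 - p))
    linear_combination (1 / (lam * kap) * y ^ (-p)) * he
  have hint_eq : (∫ y in Set.Ioi (1:ℝ), (sInfty - s y) * dens y)
      = (∫ y in Set.Ioi (1:ℝ), g y) - ∫ y in Set.Ioi (1:ℝ), dens y := by
    rw [← integral_sub hgint hdint]
    exact setIntegral_congr_fun measurableSet_Ioi fun y hy => hpt y hy
  -- value of ∫ g
  have hgval : (∫ y in Set.Ioi (1:ℝ), g y) = 1 / (lam * kap * (p - 1)) := by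
    rw [hg_def]
    rw [MeasureTheory.integral_const_mul]
    rw [integral_Ioi_rpow_of_lt (by linarith : -p < -1) one_pos]
    rw [Real.one_rpow]
    rw [show (-1:ℝ) / (-p + 1) = 1 / (p - 1) by
      rw [show -p + 1 = -(p - 1) by ring, div_neg, neg_div, neg_neg]]
    rw [div_mul_div_comm, one_mul]
  -- positivity of ∫ dens
  have hdpos : 0 < ∫ y in Set.Ioi (1:ℝ), dens y := by
    rw [setIntegral_pos_iff_support_of_nonneg_ae ?_ hdint]
    · have hsub : Ioi (1:ℝ) ⊆ Function.support dens ∩ Ioi 1 := fun x hx =>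
        ⟨(hdens_pos x hx).ne', hx⟩
      refine lt_of_lt_of_le ?_ (measure_mono hsub)
      rw [Real.volume_Ioi]
      exact ENNReal.zero_lt_top
    · filter_upwards [ae_restrict_mem measurableSet_Ioi] with x hx
      exact (hdens_pos x hx).le
  rw [hint_eq, hgval]
  linarith
end
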